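/- Let m ≥ 1 be a positive integer and let s be the number of distinct prime divisors of m. Then the subring ℤ[1/m] of ℚ has exactly 2^s unital subrings generated by one element, i.e., the set {S : S is a subring of ℤ[1/m] and S = ⟨a⟩₁ for some a ∈ ℤ[1/m]} has exactly 2^s elements. (Equivalently, Λ¹(ℤ[1/m]) is the complete graph with all loops on 2^s vertices.) -/

import Mathlib

open Finset

/-- The subring of ℚ consisting of `k / n^j`. -/
def pring (n : ℕ) (hn : n ≠ 0) : Subring ℚ where
  carrier := {x : ℚ | ∃ (k : ℤ) (j : ℕ), x = (k : ℚ) / (n : ℚ) ^ j}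
  zero_mem' := ⟨0, 0, by simp⟩
  one_mem' := ⟨1, 0, by simp⟩
  neg_mem' := by
    rintro x ⟨k, j, rfl⟩
    exact ⟨-k, j, by push_cast; ring⟩
  add_mem' := by
    rintro x y ⟨k, j, rfl⟩ ⟨k', j', rfl⟩
    have hn' : (n : ℚ) ≠ 0 := Nat.cast_ne_zero.mpr hn
    refine ⟨k * n ^ j' + k' * n ^ j, j + j', ?_⟩
    field_simp
    push_cast
    try ring
    try tauto
  mul_mem' := by
    rintro x y ⟨k, j, rfl⟩ ⟨k', j', rfl⟩
    have hn' : (n : ℚ) ≠ 0 := Nat.cast_ne_zero.mpr hn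
    refine ⟨k * k', j + j', ?_⟩
    field_simp
    push_cast
    try ring
    try tauto

theorem closure_one_div (n : ℕ) (hn : n ≠ 0) :
    Subring.closure {(1 / (n : ℚ) : ℚ)} = pring n hn := by
  apply le_antisymm
  · rw [Subring.closure_le]
    rintro x rfl
    exact ⟨1, 1, by norm_num⟩
  · rintro x ⟨k, j, rfl⟩
    have h1 : (1 / (n : ℚ)) ∈ Subring.closure {(1 / (n : ℚ) : ℚ)} :=
      Subring.subset_closure rfl
    have h2 : ((1 / (n : ℚ)) ^ j) ∈ Subring.closure {(1 / (n : ℚ) : ℚ)} := pow_mem h1 j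
    have h3 := Subring.zsmul_mem _ h2 k
    have : (k : ℚ) / (n : ℚ) ^ j = k • ((1 / (n : ℚ)) ^ j) := by
      rw [zsmul_eq_mul]
      field_simp
      rw [one_div_pow, mul_assoc, mul_one_div_cancel (pow_ne_zero _ (Nat.cast_ne_zero.mpr hn)), mul_one]
    rwa [this]

theorem mem_closure_one_div {n : ℕ} (hn : n ≠ 0) {x : ℚ} :
    x ∈ Subring.closure {(1 / (n : ℚ) : ℚ)} ↔ ∃ (k : ℤ) (j : ℕ), x = (k : ℚ) / (n : ℚ) ^ j := by
  rw [closure_one_div n hn]; rfl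

theorem dvd_pow_of_primeFactors_subset {n n' : ℕ} (hn : n ≠ 0) (hn' : n' ≠ 0)
    (h : n.primeFactors ⊆ n'.primeFactors) : n ∣ n' ^ n := by
  rw [← Nat.factorization_le_iff_dvd hn (pow_ne_zero _ hn')]
  rw [Finsupp.le_def]
  intro p
  rw [Nat.factorization_pow]
  simp only [Finsupp.smul_apply, smul_eq_mul]
  by_cases hp : p ∈ n.primeFactors
  · have hp' := h hp
    rw [Nat.mem_primeFactors] at hp'
    have h1 : 1 ≤ n'.factorization p :=
      hp'.1.factorization_pos_of_dvd hn' hp'.2.1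
    calc n.factorization p ≤ n := (Nat.factorization_lt p hn).le
      _ ≤ n * n'.factorization p := Nat.le_mul_of_pos_right _ h1
  · have : n.factorization p = 0 := by
      rw [← Finsupp.notMem_support_iff, Nat.support_factorization]
      exact hp
    simp [this]

theorem closure_one_div_le {n n' : ℕ} (hn : n ≠ 0) (hn' : n' ≠ 0)
    (h : n.primeFactors ⊆ n'.primeFactors) :
    Subring.closure {(1 / (n : ℚ) : ℚ)} ≤ Subring.closure {(1 / (n' : ℚ) : ℚ)} := by
  rw [Subring.closure_le]
  rintro x rfl
  rw [SetLike.mem_coe, mem_closure_one_div hn']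
  obtain ⟨c, hc⟩ := dvd_pow_of_primeFactors_subset hn hn' h
  have hc0 : c ≠ 0 := by
    rintro rfl
    exact pow_ne_zero n hn' (by simpa using hc)
  refine ⟨(c : ℤ), n, ?_⟩
  have hQ : ((n' : ℚ)) ^ n = (n : ℚ) * c := by exact_mod_cast congrArg (Nat.cast : ℕ → ℚ) hc
  rw [hQ]
  have h1 : (n : ℚ) ≠ 0 := Nat.cast_ne_zero.mpr hn
  have h2 : (c : ℚ) ≠ 0 := Nat.cast_ne_zero.mpr hc0
  push_cast
  field_simp

theorem primeFactors_subset_of_closure_le {n n' : ℕ} (hn : n ≠ 0) (hn' : n' ≠ 0)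
    (h : Subring.closure {(1 / (n : ℚ) : ℚ)} ≤ Subring.closure {(1 / (n' : ℚ) : ℚ)}) :
    n.primeFactors ⊆ n'.primeFactors := by
  have h1 : (1 / (n : ℚ)) ∈ Subring.closure {(1 / (n' : ℚ) : ℚ)} :=
    h (Subring.subset_closure rfl)
  rw [mem_closure_one_div hn'] at h1
  obtain ⟨k, j, hk⟩ := h1
  have hnq : (n : ℚ) ≠ 0 := Nat.cast_ne_zero.mpr hn
  have hn'q : (n' : ℚ) ≠ 0 := Nat.cast_ne_zero.mpr hn'
  have hq : ((n' : ℚ)) ^ j = k * n := by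
    field_simp at hk
    linarith
  have hz : ((n' ^ j : ℕ) : ℤ) = k * n := by exact_mod_cast hq
  have hdvd : n ∣ n' ^ j := by
    have : (n : ℤ) ∣ ((n' ^ j : ℕ) : ℤ) := ⟨k, by rw [hz]; ring⟩
    exact_mod_cast this
  rcases Nat.eq_zero_or_pos j with rfl | hj
  · have hn1 : n = 1 := Nat.dvd_one.mp (by simpa using hdvd)
    subst hn1
    simp
  · calc n.primeFactors ⊆ (n' ^ j).primeFactors :=
        Nat.primeFactors_mono hdvd (pow_ne_zero _ hn')
      _ = n'.primeFactors := Nat.primeFactors_pow n' hj.ne'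

theorem closure_eq_of_primeFactors_eq {n n' : ℕ} (hn : n ≠ 0) (hn' : n' ≠ 0)
    (h : n.primeFactors = n'.primeFactors) :
    Subring.closure {(1 / (n : ℚ) : ℚ)} = Subring.closure {(1 / (n' : ℚ) : ℚ)} :=
  le_antisymm (closure_one_div_le hn hn' h.le) (closure_one_div_le hn' hn h.ge)

theorem closure_rat (α : ℚ) :
    Subring.closure {α} = Subring.closure {(1 / (α.den : ℚ) : ℚ)} := by
  have hden : (α.den : ℚ) ≠ 0 := Nat.cast_ne_zero.mpr α.den_nz
  apply le_antisymm
  · rw [Subring.closure_le, Set.singleton_subset_iff]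
    have hα : α = (α.num : ℚ) * (1 / α.den) := by
      rw [mul_one_div, Rat.num_div_den]
    rw [SetLike.mem_coe]
    exact Set.mem_of_eq_of_mem hα
      (mul_mem (intCast_mem _ _) (Subring.subset_closure rfl))
  · rw [Subring.closure_le, Set.singleton_subset_iff]
    have hco : IsCoprime (α.num) (α.den : ℤ) := by
      rw [Int.isCoprime_iff_gcd_eq_one]
      simpa [Int.gcd] using α.reduced
    obtain ⟨u, v, huv⟩ := hco
    have h2 : (u : ℚ) * α.num + v * α.den = 1 := by exact_mod_cast congrArg (Int.cast : ℤ → ℚ) huv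
    have h3 : α * (α.den : ℚ) = α.num := Rat.mul_den_eq_num α
    have h4 : (u : ℚ) * α + v = 1 / (α.den : ℚ) := by
      rw [eq_div_iff hden, add_mul, mul_assoc, h3]
      exact h2
    rw [SetLike.mem_coe, ← h4]
    exact add_mem (mul_mem (intCast_mem _ _) (Subring.subset_closure rfl))
      (intCast_mem _ _)


/-- For a positive integer `m` with `s` distinct prime divisors, the ring `ℤ[1/m]`
has exactly `2 ^ s` one-generated unital subrings. -/
theorem stmt_12 (m : ℕ) (hm : 1 ≤ m) :
    Nat.card {S : Subring ↥(Subring.closure {(1 / (m : ℚ) : ℚ)}) |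
        ∃ a, S = Subring.closure {a}} = 2 ^ m.primeFactors.card := by
  have hm0 : m ≠ 0 := by omega
  set R : Subring ℚ := Subring.closure {(1 / (m : ℚ) : ℚ)} with hR
  -- products of subsets of prime factors are nonzero and divide m
  have hd0 : ∀ T : Finset ℕ, T ⊆ m.primeFactors → (∏ p ∈ T, p) ≠ 0 := by
    intro T hT
    exact Finset.prod_ne_zero_iff.mpr fun p hp =>
      (Nat.prime_of_mem_primeFactors (hT hp)).ne_zero
  have hdvd : ∀ T : Finset ℕ, T ⊆ m.primeFactors → (∏ p ∈ T, p) ∣ m := by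
    intro T hT
    exact (Finset.prod_dvd_prod_of_subset T m.primeFactors (fun p => p) hT).trans
      (Nat.prod_primeFactors_dvd m)
  have hmem : ∀ T : Finset ℕ, T ⊆ m.primeFactors →
      (1 / ((∏ p ∈ T, p : ℕ) : ℚ)) ∈ R := by
    intro T hT
    rw [hR, mem_closure_one_div hm0]
    refine ⟨((m / ∏ p ∈ T, p : ℕ) : ℤ), 1, ?_⟩
    have hc : (∏ p ∈ T, p) * (m / ∏ p ∈ T, p) = m := Nat.mul_div_cancel' (hdvd T hT)
    have hc0 : (m / ∏ p ∈ T, p) ≠ 0 := by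
      intro h
      rw [h, mul_zero] at hc
      exact hm0 hc.symm
    have h1 : ((∏ p ∈ T, p : ℕ) : ℚ) ≠ 0 := Nat.cast_ne_zero.mpr (hd0 T hT)
    have h2 : ((m / ∏ p ∈ T, p : ℕ) : ℚ) ≠ 0 := Nat.cast_ne_zero.mpr hc0
    have hcq : ((∏ p ∈ T, p : ℕ) : ℚ) * ((m / ∏ p ∈ T, p : ℕ) : ℚ) = (m : ℚ) := by
      exact_mod_cast congrArg (Nat.cast : ℕ → ℚ) hc
    have hmq : (m : ℚ) ≠ 0 := Nat.cast_ne_zero.mpr hm0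
    rw [pow_one, Int.cast_natCast, div_eq_div_iff h1 hmq, one_mul, ← hcq]
    ring
  -- injectivity of mapping subrings of R to subrings of ℚ
  have hsub : Function.Injective R.subtype := Subtype.coe_injective
  have hinj : Function.Injective (Subring.map R.subtype) := by
    intro S T h
    have h2 := congrArg (Subring.comap R.subtype) h
    rwa [Subring.comap_map_eq_self_of_injective hsub,
      Subring.comap_map_eq_self_of_injective hsub] at h2
  have hmap : ∀ (a : ↥R), (Subring.closure {a}).map R.subtype = Subring.closure {(a : ℚ)} := by
    intro a
    rw [RingHom.map_closure, Set.image_singleton]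
    rfl
  have hpf : ∀ T : Finset ℕ, T ⊆ m.primeFactors → (∏ p ∈ T, p).primeFactors = T :=
    fun T hT => Nat.primeFactors_prod (fun p hp => Nat.prime_of_mem_primeFactors (hT hp))
  -- the bijection
  let E : {T : Finset ℕ // T ∈ m.primeFactors.powerset} →
      {S : Subring ↥R | ∃ a, S = Subring.closure {a}} :=
    fun T => ⟨Subring.closure
      {(⟨1 / ((∏ p ∈ T.1, p : ℕ) : ℚ), hmem T.1 (Finset.mem_powerset.mp T.2)⟩ : ↥R)}, _, rfl⟩
  have hE : Function.Bijective E := by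
    constructor
    · rintro ⟨T, hT⟩ ⟨T', hT'⟩ h
      rw [Finset.mem_powerset] at hT hT'
      have h1 := congrArg (fun S => Subring.map R.subtype S.1) h
      simp only [E, hmap] at h1
      have h2 : (∏ p ∈ T, p).primeFactors = (∏ p ∈ T', p).primeFactors :=
        Finset.Subset.antisymm
          (primeFactors_subset_of_closure_le (hd0 T hT) (hd0 T' hT') h1.le)
          (primeFactors_subset_of_closure_le (hd0 T' hT') (hd0 T hT) h1.ge)
      rw [hpf T hT, hpf T' hT'] at h2
      exact Subtype.ext h2
    · rintro ⟨S, a, rfl⟩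
      have ha : (a : ℚ) ∈ Subring.closure {(1 / (m : ℚ) : ℚ)} := a.2
      rw [mem_closure_one_div hm0] at ha
      obtain ⟨k, j, hk⟩ := ha
      have hmq : (m : ℚ) ≠ 0 := Nat.cast_ne_zero.mpr hm0
      -- the denominator of a divides m ^ (j+1)
      have hden : (a : ℚ).den ∣ m ^ (j + 1) := by
        have h1 : (a : ℚ) = (((k * m : ℤ) : ℚ)) / (((m : ℤ) ^ (j + 1) : ℤ) : ℚ) := by
          rw [hk]
          push_cast
          rw [pow_succ]
          field_simp
        have h2 := Rat.den_dvd (k * m) ((m : ℤ) ^ (j + 1))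
        rw [Rat.divInt_eq_div, ← h1] at h2
        have h3 : ((m : ℤ) ^ (j + 1)) = ((m ^ (j + 1) : ℕ) : ℤ) := by push_cast; ring
        rw [h3] at h2
        exact_mod_cast h2
      have hTsub : (a : ℚ).den.primeFactors ⊆ m.primeFactors := by
        rw [← Nat.primeFactors_pow m (Nat.succ_ne_zero j)]
        exact Nat.primeFactors_mono hden (pow_ne_zero _ hm0)
      refine ⟨⟨(a : ℚ).den.primeFactors, Finset.mem_powerset.mpr hTsub⟩, ?_⟩
      apply Subtype.ext
      apply hinj
      show Subring.map R.subtype _ = Subring.map R.subtype _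
      rw [hmap, hmap]
      have hdeq : (∏ p ∈ (a : ℚ).den.primeFactors, p).primeFactors
          = (a : ℚ).den.primeFactors := hpf _ hTsub
      calc Subring.closure {(1 / ((∏ p ∈ (a : ℚ).den.primeFactors, p : ℕ) : ℚ) : ℚ)}
          = Subring.closure {(1 / (((a : ℚ).den : ℕ) : ℚ) : ℚ)} :=
            closure_eq_of_primeFactors_eq (hd0 _ hTsub) (a : ℚ).den_nz hdeq
        _ = Subring.closure {(a : ℚ)} := (closure_rat (a : ℚ)).symm
  have hcard := Nat.card_eq_of_bijective E hE
  rw [← hcard]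
  have : Nat.card {T : Finset ℕ // T ∈ m.primeFactors.powerset}
      = m.primeFactors.powerset.card := Nat.card_eq_finsetCard _
  rw [this, Finset.card_powerset]
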